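/- Let W₀(q,p) = (1/π)·exp(−(q²+p²)) be the Wigner function of the harmonic-oscillator ground state and W₁(q,p) = (1/π)·(2(q²+p²) − 1)·exp(−(q²+p²)) the Wigner function of the first excited state. For a real scale parameter a with 0 < |a| < 1, the overlap integral ∫∫_{ℝ²} W₁(q,p) · a⁻²·W₀(q/a, p/a) dq dp is strictly negative. -/

import Mathlib

open Real MeasureTheory Set Filter Topology

/-- Wigner function of the harmonic-oscillator ground state. -/
noncomputable def W0 (q p : ℝ) : ℝ := (1 / π) * Real.exp (-(q ^ 2 + p ^ 2))

/-- Wigner function of the first excited state. -/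
noncomputable def W1 (q p : ℝ) : ℝ :=
  (1 / π) * (2 * (q ^ 2 + p ^ 2) - 1) * Real.exp (-(q ^ 2 + p ^ 2))

lemma radial_integrable (c : ℝ) (hc : 0 < c) :
    Integrable (fun r : ℝ => r * ((2 * r ^ 2 - 1) * Real.exp (-c * r ^ 2))) := by
  have h3 : Integrable (fun r : ℝ => r ^ (3 : ℝ) * Real.exp (-c * r ^ 2)) :=
    integrable_rpow_mul_exp_neg_mul_sq hc (by norm_num : (-1 : ℝ) < 3)
  have h3' : Integrable (fun r : ℝ => r ^ (3 : ℕ) * Real.exp (-c * r ^ 2)) := by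
    have : ∀ r : ℝ, r ^ (3 : ℝ) = r ^ (3 : ℕ) := fun r => by
      rw [← Real.rpow_natCast r 3]; norm_num
    simpa only [this] using h3
  have h1 : Integrable (fun r : ℝ => r * Real.exp (-c * r ^ 2)) :=
    integrable_mul_exp_neg_mul_sq hc
  have heq : (fun r : ℝ => r * ((2 * r ^ 2 - 1) * Real.exp (-c * r ^ 2)))
      = fun r : ℝ => 2 * (r ^ (3 : ℕ) * Real.exp (-c * r ^ 2)) - r * Real.exp (-c * r ^ 2) := by
    funext r; ring
  rw [heq]
  exact (h3'.const_mul 2).sub h1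

lemma radial_integral (c : ℝ) (hc : 0 < c) :
    ∫ r in Ioi (0 : ℝ), r * ((2 * r ^ 2 - 1) * Real.exp (-c * r ^ 2))
      = (2 - c) / (2 * c ^ 2) := by
  have hc' : c ≠ 0 := ne_of_gt hc
  set F : ℝ → ℝ := fun r => (-(1 / c) * r ^ 2 + (c - 2) / (2 * c ^ 2)) * Real.exp (-c * r ^ 2)
    with hF
  have A : ∀ r : ℝ, HasDerivAt F (r * ((2 * r ^ 2 - 1) * Real.exp (-c * r ^ 2))) r := by
    intro r
    have h1 : HasDerivAt (fun r : ℝ => -(1 / c) * r ^ 2 + (c - 2) / (2 * c ^ 2))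
        (-(1 / c) * (2 * r)) r := by
      simpa using ((hasDerivAt_pow 2 r).const_mul (-(1 / c))).add_const ((c - 2) / (2 * c ^ 2))
    have h2 : HasDerivAt (fun r : ℝ => Real.exp (-c * r ^ 2))
        (Real.exp (-c * r ^ 2) * (-c * (2 * r))) r := by
      simpa [mul_comm] using ((hasDerivAt_pow 2 r).const_mul (-c)).exp
    have := h1.mul h2
    convert this using 1
    · rfl
    · rfl
    · rfl
    · field_simp
      ring
  have B : Tendsto F atTop (𝓝 0) := by
    have h1 : Tendsto (fun t : ℝ => t * Real.exp (-t)) atTop (𝓝 0) := by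
      simpa using Real.tendsto_pow_mul_exp_neg_atTop_nhds_zero 1
    have h0 : Tendsto (fun t : ℝ => Real.exp (-t)) atTop (𝓝 0) := by
      simpa using Real.tendsto_pow_mul_exp_neg_atTop_nhds_zero 0
    have h2 : Tendsto (fun r : ℝ => c * r ^ 2) atTop atTop :=
      (tendsto_pow_atTop two_ne_zero).const_mul_atTop hc
    have T1 : Tendsto (fun r : ℝ => c * r ^ 2 * Real.exp (-(c * r ^ 2))) atTop (𝓝 0) :=
      h1.comp h2
    have T0 : Tendsto (fun r : ℝ => Real.exp (-(c * r ^ 2))) atTop (𝓝 0) := h0.comp h2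
    have := (T1.const_mul (-(1 / c) / c)).add (T0.const_mul ((c - 2) / (2 * c ^ 2)))
    have heq : F = fun r : ℝ => -(1 / c) / c * (c * r ^ 2 * Real.exp (-(c * r ^ 2)))
        + (c - 2) / (2 * c ^ 2) * Real.exp (-(c * r ^ 2)) := by
      funext r
      rw [hF]
      have : -(c * r ^ 2) = -c * r ^ 2 := by ring
      rw [this]
      field_simp
    rw [heq]
    simpa using this
  have := integral_Ioi_of_hasDerivAt_of_tendsto' (f := F) (a := 0)
    (fun x _ => A x) (radial_integrable c hc).integrableOn B
  rw [this, hF]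
  simp
  ring


theorem wigner_scaling_overlap_neg_of_lt_one (a : ℝ) (ha : 0 < |a|) (ha1 : |a| < 1) :
    (∫ x : ℝ × ℝ, W1 x.1 x.2 * (a ^ 2)⁻¹ * W0 (x.1 / a) (x.2 / a)) < 0 := by
  have ha0 : a ≠ 0 := by
    intro h; simp [h] at ha
  have ha2 : (0 : ℝ) < a ^ 2 := by positivity
  have ha2lt : a ^ 2 < 1 := by
    have := sq_abs a
    nlinarith [abs_nonneg a]
  set c : ℝ := 1 + (a ^ 2)⁻¹ with hc_def
  have hinv : 1 < (a ^ 2)⁻¹ := ((one_lt_inv₀ ha2).mpr ha2lt)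
  have hc2 : 2 < c := by rw [hc_def]; linarith
  have hc0 : 0 < c := by linarith
  have hc' : c ≠ 0 := ne_of_gt hc0
  have hπ : (0 : ℝ) < π := Real.pi_pos
  have key : ∀ x : ℝ × ℝ, W1 x.1 x.2 * (a ^ 2)⁻¹ * W0 (x.1 / a) (x.2 / a)
      = (π ^ 2 * a ^ 2)⁻¹ *
        ((2 * (x.1 ^ 2 + x.2 ^ 2) - 1) * Real.exp (-c * (x.1 ^ 2 + x.2 ^ 2))) := by
    rintro ⟨q, p⟩
    simp only [W0, W1]
    have he : Real.exp (-(q ^ 2 + p ^ 2)) * Real.exp (-((q / a) ^ 2 + (p / a) ^ 2))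
        = Real.exp (-c * (q ^ 2 + p ^ 2)) := by
      rw [← Real.exp_add]
      congr 1
      rw [hc_def]
      field_simp
      ring
    calc (1 / π) * (2 * (q ^ 2 + p ^ 2) - 1) * Real.exp (-(q ^ 2 + p ^ 2)) * (a ^ 2)⁻¹ *
          ((1 / π) * Real.exp (-((q / a) ^ 2 + (p / a) ^ 2)))
        = (1 / π) * (1 / π) * (a ^ 2)⁻¹ * (2 * (q ^ 2 + p ^ 2) - 1) *
          (Real.exp (-(q ^ 2 + p ^ 2)) * Real.exp (-((q / a) ^ 2 + (p / a) ^ 2))) := by ring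
      _ = (π ^ 2 * a ^ 2)⁻¹ *
          ((2 * (q ^ 2 + p ^ 2) - 1) * Real.exp (-c * (q ^ 2 + p ^ 2))) := by
          rw [he, mul_inv, pow_two, mul_inv]
          ring
  simp_rw [key]
  rw [MeasureTheory.integral_const_mul]
  have hpolar := integral_comp_polarCoord_symm
    (fun x : ℝ × ℝ => (2 * (x.1 ^ 2 + x.2 ^ 2) - 1) * Real.exp (-c * (x.1 ^ 2 + x.2 ^ 2)))
  rw [← hpolar]
  have hsymm : ∀ p : ℝ × ℝ, p.1 •
      ((2 * ((polarCoord.symm p).1 ^ 2 + (polarCoord.symm p).2 ^ 2) - 1) *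
        Real.exp (-c * ((polarCoord.symm p).1 ^ 2 + (polarCoord.symm p).2 ^ 2)))
      = p.1 * ((2 * p.1 ^ 2 - 1) * Real.exp (-c * p.1 ^ 2)) := by
    intro p
    have h1 : (polarCoord.symm p).1 = p.1 * Real.cos p.2 := rfl
    have h2 : (polarCoord.symm p).2 = p.1 * Real.sin p.2 := rfl
    have hcs : (p.1 * Real.cos p.2) ^ 2 + (p.1 * Real.sin p.2) ^ 2 = p.1 ^ 2 := by
      have := Real.sin_sq_add_cos_sq p.2
      nlinarith [this]
    rw [h1, h2, hcs, smul_eq_mul]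
  simp_rw [hsymm]
  have htarget : polarCoord.target = Ioi (0 : ℝ) ×ˢ Ioo (-π) π := rfl
  rw [htarget]
  have hprodmul := MeasureTheory.setIntegral_prod_mul (μ := (volume : Measure ℝ))
    (ν := (volume : Measure ℝ))
    (fun r : ℝ => r * ((2 * r ^ 2 - 1) * Real.exp (-c * r ^ 2)))
    (fun _ : ℝ => (1 : ℝ)) (Ioi 0) (Ioo (-π) π)
  simp only [mul_one] at hprodmul
  rw [MeasureTheory.Measure.volume_eq_prod, hprodmul, radial_integral c hc0]
  have hIoo : ∫ _ in Ioo (-π) π, (1 : ℝ) = 2 * π := by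
    simp [Real.volume_Ioo]
    rw [max_eq_left (by linarith)]
    ring
  rw [hIoo]
  have hneg : (2 - c) / (2 * c ^ 2) * (2 * π) < 0 := by
    apply mul_neg_of_neg_of_pos
    · apply div_neg_of_neg_of_pos <;> nlinarith
    · linarith
  have hpos : (0 : ℝ) < (π ^ 2 * a ^ 2)⁻¹ := by positivity
  exact mul_neg_of_pos_of_neg hpos hneg
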